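/- The function g is prox-regular (with parameter r = 0) at every point of Ω: for every x̄ ∈ Ω and every v̄ ∈ N_{Π(x̄)}(x̄), there exists ε > 0 such that g(x′) ≥ g(x) + ⟨v, x′ − x⟩ whenever x′ ∈ ℝⁿ with ‖x′ − x̄‖ ≤ ε, x ∈ Ω with ‖x − x̄‖ < ε and g(x) < g(x̄) + ε, and v ∈ N_{Π(x)}(x) with ‖v − v̄‖ < ε. (Here N_{Π(x)}(x) coincides with the limiting subdifferential ∂g(x) for x ∈ Ω.) -/

import Mathlib

open scoped Classical

noncomputable section

/-- The box `Ω = {x : l ≤ x ≤ u}` in ℝⁿ. -/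
def Om {n : ℕ} (l u : Fin n → ℝ) : Set (EuclideanSpace ℝ (Fin n)) :=
  {x | ∀ i, l i ≤ x i ∧ x i ≤ u i}

/-- The ℓ₀-norm (number of nonzero entries) of a vector. -/
def zeroNorm {m : ℕ} (v : Fin m → ℝ) : ℕ := (Function.support v).ncard

/-- `g(x) = λ₁‖Bx‖₀ + λ₂‖x‖₀ + δ_Ω(x)` as an extended-real-valued function. -/
def gfun {n p : ℕ} (B : Matrix (Fin p) (Fin n) ℝ) (lam1 lam2 : ℝ) (l u : Fin n → ℝ)
    (x : EuclideanSpace ℝ (Fin n)) : EReal :=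
  if x ∈ Om l u then
    ((lam1 * (zeroNorm (B.mulVec x) : ℝ) + lam2 * (zeroNorm x : ℝ) : ℝ) : EReal)
  else ⊤

/-- `Π(z) = {x ∈ Ω : supp(x) ⊆ supp(z), supp(Bx) ⊆ supp(Bz)}`. -/
def PiSet {n p : ℕ} (B : Matrix (Fin p) (Fin n) ℝ) (l u : Fin n → ℝ)
    (z : EuclideanSpace ℝ (Fin n)) : Set (EuclideanSpace ℝ (Fin n)) :=
  {x | x ∈ Om l u ∧ Function.support x ⊆ Function.support z ∧
    Function.support (B.mulVec x) ⊆ Function.support (B.mulVec z)}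

/-- Normal cone of a convex set `S` at `x`. -/
def normalCone {n : ℕ} (S : Set (EuclideanSpace ℝ (Fin n)))
    (x : EuclideanSpace ℝ (Fin n)) : Set (EuclideanSpace ℝ (Fin n)) :=
  {v | ∀ y ∈ S, (inner ℝ v (y - x) : ℝ) ≤ 0}

/-- Near `x̄`, the supports of `y` and `By` contain those of `x̄` and `Bx̄`. -/
lemma supp_stable {n p : ℕ} (B : Matrix (Fin p) (Fin n) ℝ) (xbar : EuclideanSpace ℝ (Fin n)) :
    ∃ r > (0:ℝ), ∀ y : EuclideanSpace ℝ (Fin n), ‖y - xbar‖ ≤ r →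
      Function.support xbar ⊆ Function.support y ∧
      Function.support (B.mulVec xbar) ⊆ Function.support (B.mulVec y) := by
  set U : Set (EuclideanSpace ℝ (Fin n)) :=
    (⋂ i, {y | xbar i ≠ 0 → y i ≠ 0}) ∩
    (⋂ j, {y | B.mulVec xbar j ≠ 0 → B.mulVec y j ≠ 0}) with hUdef
  have hc1 : ∀ i : Fin n, Continuous fun y : EuclideanSpace ℝ (Fin n) => y i := fun i =>
    (continuous_apply i).comp (PiLp.continuous_ofLp (p := 2) (β := _))
  have hc2 : ∀ j : Fin p, Continuous fun y : EuclideanSpace ℝ (Fin n) => B.mulVec y j := by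
    intro j
    have : (fun y : EuclideanSpace ℝ (Fin n) => B.mulVec y j)
        = fun y => ∑ i, B j i * y i := by
      funext y; simp [Matrix.mulVec, dotProduct]
    rw [this]
    exact continuous_finset_sum _ fun i _ => continuous_const.mul (hc1 i)
  have hU : IsOpen U := by
    apply IsOpen.inter
    · refine isOpen_iInter_of_finite fun i => ?_
      by_cases h : xbar i = 0
      · convert isOpen_univ using 1
        ext y; simp [h]
      · have : {y : EuclideanSpace ℝ (Fin n) | xbar i ≠ 0 → y i ≠ 0}
            = (fun y : EuclideanSpace ℝ (Fin n) => y i) ⁻¹' {(0:ℝ)}ᶜ := by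
          ext y; simp [h]
        rw [this]
        exact (isOpen_compl_singleton).preimage (hc1 i)
    · refine isOpen_iInter_of_finite fun j => ?_
      by_cases h : B.mulVec xbar j = 0
      · convert isOpen_univ using 1
        ext y; simp [h]
      · have : {y : EuclideanSpace ℝ (Fin n) | B.mulVec xbar j ≠ 0 → B.mulVec y j ≠ 0}
            = (fun y : EuclideanSpace ℝ (Fin n) => B.mulVec y j) ⁻¹' {(0:ℝ)}ᶜ := by
          ext y; simp [h]
        rw [this]
        exact (isOpen_compl_singleton).preimage (hc2 j)
  have hmem : xbar ∈ U := by
    constructor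
    · exact Set.mem_iInter.2 fun i => fun h => h
    · exact Set.mem_iInter.2 fun j => fun h => h
  obtain ⟨r, hr, hball⟩ := Metric.isOpen_iff.1 hU xbar hmem
  refine ⟨r / 2, by linarith, fun y hy => ?_⟩
  have hyU : y ∈ U := by
    apply hball
    rw [Metric.mem_ball, dist_eq_norm]
    linarith
  obtain ⟨h1, h2⟩ := hyU
  constructor
  · intro i hi
    exact (Set.mem_iInter.1 h1 i) hi
  · intro j hj
    exact (Set.mem_iInter.1 h2 j) hj

/-- Gap lemma: if `a' ≤ a`, `b' ≤ b` and not both equal, then the weighted count jumps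
by at least `min lam1 lam2`. -/
lemma gapB (lam1 lam2 : ℝ) (h1 : 0 < lam1) (h2 : 0 < lam2)
    {a a' b b' : ℕ} (ha : a' ≤ a) (hb : b' ≤ b) (hne : ¬(a = a' ∧ b = b')) :
    lam1 * a' + lam2 * b' + min lam1 lam2 ≤ lam1 * a + lam2 * b := by
  have hmono1 : lam1 * a' ≤ lam1 * a :=
    mul_le_mul_of_nonneg_left (by exact_mod_cast ha) h1.le
  have hmono2 : lam2 * b' ≤ lam2 * b :=
    mul_le_mul_of_nonneg_left (by exact_mod_cast hb) h2.le
  rcases not_and_or.1 hne with h | h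
  · have : a' + 1 ≤ a := lt_of_le_of_ne ha (Ne.symm h)
    have h' : (a' : ℝ) + 1 ≤ a := by exact_mod_cast this
    have : lam1 * (a' + 1) ≤ lam1 * a := mul_le_mul_of_nonneg_left h' h1.le
    have hm := min_le_left lam1 lam2
    nlinarith
  · have : b' + 1 ≤ b := lt_of_le_of_ne hb (Ne.symm h)
    have h' : (b' : ℝ) + 1 ≤ b := by exact_mod_cast this
    have : lam2 * (b' + 1) ≤ lam2 * b := mul_le_mul_of_nonneg_left h' h2.le
    have hm := min_le_right lam1 lam2
    nlinarith

/-- `g` is prox-regular (with r = 0) at every point of Ω: for every x̄ ∈ Ω and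
every v̄ ∈ N_{Π(x̄)}(x̄) (= ∂g(x̄)), there is ε > 0 such that
g(x′) ≥ g(x) + ⟨v, x′ − x⟩ whenever ‖x′ − x̄‖ ≤ ε, x ∈ Ω with ‖x − x̄‖ < ε and
g(x) < g(x̄) + ε, and v ∈ N_{Π(x)}(x) with ‖v − v̄‖ < ε. -/
theorem stmt1 {n p : ℕ} (B : Matrix (Fin p) (Fin n) ℝ) (lam1 lam2 : ℝ)
    (hlam1 : 0 < lam1) (hlam2 : 0 < lam2)
    (l u : Fin n → ℝ) (hl : ∀ i, l i ≤ 0) (hu : ∀ i, 0 ≤ u i)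
    (xbar : EuclideanSpace ℝ (Fin n)) (hxbar : xbar ∈ Om l u)
    (vbar : EuclideanSpace ℝ (Fin n)) (hvbar : vbar ∈ normalCone (PiSet B l u xbar) xbar) :
    ∃ ε > (0 : ℝ), ∀ x ∈ Om l u, ‖x - xbar‖ < ε →
      gfun B lam1 lam2 l u x < gfun B lam1 lam2 l u xbar + (ε : EReal) →
      ∀ v ∈ normalCone (PiSet B l u x) x, ‖v - vbar‖ < ε →
      ∀ x' : EuclideanSpace ℝ (Fin n), ‖x' - xbar‖ ≤ ε →
      gfun B lam1 lam2 l u x + (((inner ℝ v (x' - x) : ℝ)) : EReal) ≤ gfun B lam1 lam2 l u x' := by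
  obtain ⟨r, hr, hrsupp⟩ := supp_stable B xbar
  set δ : ℝ := min lam1 lam2 with hδdef
  have hδ : 0 < δ := lt_min hlam1 hlam2
  set ε : ℝ := min (min r 1) (δ / (2 * (‖vbar‖ + 1))) with hεdef
  have hvb1 : (0:ℝ) < ‖vbar‖ + 1 := by positivity
  have hε : 0 < ε := by
    apply lt_min (lt_min hr one_pos)
    positivity
  have hεr : ε ≤ r := le_trans (min_le_left _ _) (min_le_left _ _)
  have hε1 : ε ≤ 1 := le_trans (min_le_left _ _) (min_le_right _ _)
  have hεδ : ε ≤ δ / (2 * (‖vbar‖ + 1)) := min_le_right _ _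
  have hεδ' : ε < δ := by
    have : δ / (2 * (‖vbar‖ + 1)) < δ :=
      div_lt_self hδ (by have := norm_nonneg vbar; linarith : (1:ℝ) < 2 * (‖vbar‖ + 1))
    linarith
  refine ⟨ε, hε, fun x hx hxnear hglt v hv hvnear x' hx'near => ?_⟩
  -- abbreviations for the counts
  set a0 : ℕ := zeroNorm (B.mulVec xbar) with ha0
  set b0 : ℕ := zeroNorm xbar with hb0
  set a1 : ℕ := zeroNorm (B.mulVec x) with ha1
  set b1 : ℕ := zeroNorm x with hb1
  -- support inclusions for x
  obtain ⟨hsx, hsBx⟩ := hrsupp x (le_trans hxnear.le hεr)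
  have ha01 : a0 ≤ a1 := Set.ncard_le_ncard hsBx (Set.toFinite _)
  have hb01 : b0 ≤ b1 := Set.ncard_le_ncard hsx (Set.toFinite _)
  -- g(x) < g(x̄) + ε as reals
  rw [gfun, if_pos hx, gfun, if_pos hxbar] at hglt
  have hgltR : lam1 * a1 + lam2 * b1 < lam1 * a0 + lam2 * b0 + ε := by
    have := hglt
    rw [← EReal.coe_add] at this
    exact_mod_cast this
  -- hence equal counts
  have heqc : a1 = a0 ∧ b1 = b0 := by
    by_contra hne
    have := gapB lam1 lam2 hlam1 hlam2 ha01 hb01 hne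
    rw [← hδdef] at this
    linarith
  -- hence equal supports
  have hsuppx : Function.support x = Function.support xbar :=
    (Set.eq_of_subset_of_ncard_le hsx (le_of_eq heqc.2) (Set.toFinite _)).symm
  have hsuppBx : Function.support (B.mulVec x) = Function.support (B.mulVec xbar) :=
    (Set.eq_of_subset_of_ncard_le hsBx (le_of_eq heqc.1) (Set.toFinite _)).symm
  -- Π(x) = Π(x̄)
  have hPi : PiSet B l u x = PiSet B l u xbar := by
    unfold PiSet
    rw [hsuppx, hsuppBx]
  -- now handle x'
  by_cases hx' : x' ∈ Om l u
  · -- x' ∈ Ω : support inclusions for x'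
    obtain ⟨hsx', hsBx'⟩ := hrsupp x' (le_trans hx'near hεr)
    set a2 : ℕ := zeroNorm (B.mulVec x') with ha2
    set b2 : ℕ := zeroNorm x' with hb2
    have ha02 : a0 ≤ a2 := Set.ncard_le_ncard hsBx' (Set.toFinite _)
    have hb02 : b0 ≤ b2 := Set.ncard_le_ncard hsx' (Set.toFinite _)
    rw [gfun, if_pos hx, gfun, if_pos hx']
    rw [← EReal.coe_add, EReal.coe_le_coe_iff]
    show lam1 * a1 + lam2 * b1 + (inner ℝ v (x' - x) : ℝ) ≤ lam1 * a2 + lam2 * b2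
    by_cases heq2 : a2 = a0 ∧ b2 = b0
    · -- x' ∈ Π(x̄) = Π(x), use the normal cone inequality
      have hsuppx' : Function.support x' = Function.support xbar :=
        (Set.eq_of_subset_of_ncard_le hsx' (le_of_eq heq2.2) (Set.toFinite _)).symm
      have hsuppBx' : Function.support (B.mulVec x') = Function.support (B.mulVec xbar) :=
        (Set.eq_of_subset_of_ncard_le hsBx' (le_of_eq heq2.1) (Set.toFinite _)).symm
      have hx'Pi : x' ∈ PiSet B l u x := by
        refine ⟨hx', ?_, ?_⟩
        · rw [hsuppx', hsuppx]
        · rw [hsuppBx', hsuppBx]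
      have hinner : (inner ℝ v (x' - x) : ℝ) ≤ 0 := hv x' hx'Pi
      have : lam1 * a1 + lam2 * b1 = lam1 * a2 + lam2 * b2 := by
        rw [heqc.1, heqc.2, heq2.1, heq2.2]
      linarith
    · -- count jumps by at least δ; bound the inner product by δ
      have hjump : lam1 * a0 + lam2 * b0 + δ ≤ lam1 * a2 + lam2 * b2 :=
        gapB lam1 lam2 hlam1 hlam2 ha02 hb02 heq2
      have hvnorm : ‖v‖ ≤ ‖vbar‖ + ε := by
        have := norm_sub_norm_le v vbar
        linarith
      have hxx' : ‖x' - x‖ ≤ 2 * ε := by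
        calc ‖x' - x‖ = ‖(x' - xbar) - (x - xbar)‖ := by abel_nf
          _ ≤ ‖x' - xbar‖ + ‖x - xbar‖ := norm_sub_le _ _
          _ ≤ 2 * ε := by linarith
      have hinner : (inner ℝ v (x' - x) : ℝ) ≤ δ := by
        have h1 : (inner ℝ v (x' - x) : ℝ) ≤ ‖v‖ * ‖x' - x‖ := real_inner_le_norm _ _
        have h2 : ‖v‖ * ‖x' - x‖ ≤ (‖vbar‖ + 1) * (2 * ε) := by
          apply mul_le_mul (by linarith) hxx' (norm_nonneg _) (by linarith)
        have h3 : (‖vbar‖ + 1) * (2 * ε) ≤ δ := by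
          have := mul_le_mul_of_nonneg_left hεδ (by positivity : (0:ℝ) ≤ 2 * (‖vbar‖ + 1))
          rw [mul_div_cancel₀] at this
          · linarith [this]
          · positivity
        linarith
      have : lam1 * a1 + lam2 * b1 = lam1 * a0 + lam2 * b0 := by
        rw [heqc.1, heqc.2]
      linarith
  · -- x' ∉ Ω : RHS is ⊤
    have htop : gfun B lam1 lam2 l u x' = ⊤ := by rw [gfun, if_neg hx']
    rw [htop]
    exact le_top
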